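/- Every graph on at least 10 vertices contains a clique on four vertices, or a stable set on four vertices, or two vertex-disjoint triangles. -/

import Mathlib

open SimpleGraph

/-- A set of vertices is independent (stable) if no two of its vertices are adjacent. -/
def SimpleGraph.IsStableSet {V : Type*} (G : SimpleGraph V) (s : Set V) : Prop :=
  s.Pairwise fun a b => ¬ G.Adj a b

namespace TenVerticesAux

open Finset

variable {V : Type*}

lemma exists_three [DecidableEq V] {s : Finset V} (h : 3 ≤ s.card) :
    ∃ a b c, a ∈ s ∧ b ∈ s ∧ c ∈ s ∧ a ≠ b ∧ a ≠ c ∧ b ≠ c := by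
  obtain ⟨t, hts, ht⟩ := Finset.exists_subset_card_eq h
  obtain ⟨a, b, c, hab, hac, hbc, heq⟩ := Finset.card_eq_three.mp ht
  refine ⟨a, b, c, hts ?_, hts ?_, hts ?_, hab, hac, hbc⟩ <;> rw [heq] <;> simp

lemma exists_four [DecidableEq V] {s : Finset V} (h : 4 ≤ s.card) :
    ∃ a b c d, a ∈ s ∧ b ∈ s ∧ c ∈ s ∧ d ∈ s ∧
      a ≠ b ∧ a ≠ c ∧ a ≠ d ∧ b ≠ c ∧ b ≠ d ∧ c ≠ d := by
  obtain ⟨t, hts, ht⟩ := Finset.exists_subset_card_eq h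
  obtain ⟨a, ha⟩ := Finset.card_pos.mp (by omega : 0 < t.card)
  have h3 : (t.erase a).card = 3 := by rw [Finset.card_erase_of_mem ha]; omega
  obtain ⟨b, c, d, hbc, hbd, hcd, heq⟩ := Finset.card_eq_three.mp h3
  have hb : b ∈ t.erase a := by rw [heq]; simp
  have hc : c ∈ t.erase a := by rw [heq]; simp
  have hd : d ∈ t.erase a := by rw [heq]; simp
  exact ⟨a, b, c, d, hts ha, hts (Finset.mem_of_mem_erase hb), hts (Finset.mem_of_mem_erase hc),
    hts (Finset.mem_of_mem_erase hd), (Finset.ne_of_mem_erase hb).symm,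
    (Finset.ne_of_mem_erase hc).symm, (Finset.ne_of_mem_erase hd).symm, hbc, hbd, hcd⟩

lemma pair_of_card_two [DecidableEq V] {s : Finset V} {x : V} (h : s.card = 2) (hx : x ∈ s) :
    ∃ y, y ≠ x ∧ s = {x, y} := by
  obtain ⟨a, b, hab, rfl⟩ := Finset.card_eq_two.mp h
  rcases Finset.mem_insert.mp hx with rfl | hx'
  · exact ⟨b, hab.symm, rfl⟩
  · rw [Finset.mem_singleton.mp hx']
    exact ⟨a, hab, Finset.pair_comm a b⟩

lemma even_card_of_symm [DecidableEq V] (E : Finset (V × V)) :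
    (∀ p ∈ E, (p.2, p.1) ∈ E) → (∀ p ∈ E, p.1 ≠ p.2) → Even E.card := by
  induction E using Finset.strongInduction with
  | _ E ih =>
    intro hs hi
    rcases E.eq_empty_or_nonempty with rfl | ⟨p, hp⟩
    · simp
    · have hqE : (p.2, p.1) ∈ E := hs p hp
      have hqp : (p.2, p.1) ≠ p := by
        intro hc
        exact hi p hp (by rw [Prod.ext_iff] at hc; exact hc.1.symm)
      set E' := (E.erase p).erase (p.2, p.1) with hE'
      have hq' : (p.2, p.1) ∈ E.erase p := Finset.mem_erase.mpr ⟨hqp, hqE⟩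
      have hsub : E' ⊂ E :=
        lt_of_le_of_lt (Finset.erase_subset _ _) (Finset.erase_ssubset hp)
      have hmem : ∀ r, r ∈ E' ↔ r ∈ E ∧ r ≠ p ∧ r ≠ (p.2, p.1) := by
        intro r
        simp only [hE', Finset.mem_erase]
        tauto
      have hs' : ∀ r ∈ E', (r.2, r.1) ∈ E' := by
        intro r hr
        rw [hmem] at hr ⊢
        obtain ⟨hrE, hrp, hrq⟩ := hr
        refine ⟨hs r hrE, ?_, ?_⟩
        · intro hc; apply hrq
          rw [Prod.ext_iff] at hc ⊢; exact ⟨hc.2, hc.1⟩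
        · intro hc; apply hrp
          rw [Prod.ext_iff] at hc ⊢; exact ⟨hc.2, hc.1⟩
      have hi' : ∀ r ∈ E', r.1 ≠ r.2 := fun r hr => hi r ((hmem r).mp hr).1
      obtain ⟨k, hk⟩ := ih E' hsub hs' hi'
      have hc1 : (E.erase p).card = E.card - 1 := Finset.card_erase_of_mem hp
      have hc2 : E'.card = (E.erase p).card - 1 := Finset.card_erase_of_mem hq'
      have hpos : 1 ≤ E.card := Finset.card_pos.mpr ⟨p, hp⟩
      have hpos2 : 1 ≤ (E.erase p).card := Finset.card_pos.mpr ⟨_, hq'⟩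
      exact ⟨k + 1, by omega⟩

variable (G : SimpleGraph V)

lemma even_sum_adj [DecidableEq V] [DecidableRel G.Adj] (Y : Finset V) :
    Even (∑ v ∈ Y, (Y.filter (G.Adj v)).card) := by
  classical
  set E := (Y ×ˢ Y).filter (fun p => G.Adj p.1 p.2) with hE
  have hcard : E.card = ∑ v ∈ Y, (Y.filter (G.Adj v)).card := by
    rw [Finset.card_eq_sum_card_fiberwise (f := Prod.fst) (t := Y)
      (by intro p hp; exact (Finset.mem_product.mp (Finset.mem_filter.mp hp).1).1)]
    apply Finset.sum_congr rfl
    intro v hv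
    have hset : E.filter (fun p => p.1 = v) = {v} ×ˢ (Y.filter (G.Adj v)) := by
      ext ⟨x, y⟩
      simp only [hE, Finset.mem_filter, Finset.mem_product, Finset.mem_singleton]
      constructor
      · rintro ⟨⟨⟨h1, h2⟩, h3⟩, rfl⟩
        exact ⟨rfl, h2, h3⟩
      · rintro ⟨rfl, h2, h3⟩
        exact ⟨⟨⟨hv, h2⟩, h3⟩, rfl⟩
    rw [hset, Finset.card_product, Finset.card_singleton, one_mul]
  rw [← hcard]
  apply even_card_of_symm
  · intro p hp
    simp only [hE, Finset.mem_filter, Finset.mem_product] at hp ⊢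
    exact ⟨⟨hp.1.2, hp.1.1⟩, hp.2.symm⟩
  · intro p hp
    simp only [hE, Finset.mem_filter, Finset.mem_product] at hp
    exact hp.2.ne


variable [DecidableEq V] {G : SimpleGraph V} [DecidableRel G.Adj]


/-- R(3,3) ≤ 6 : a set with no triangle and no stable 3-set has at most 5 vertices. -/
lemma R33 {X : Finset V}
    (htf : ∀ x ∈ X, ∀ y ∈ X, ∀ z ∈ X, G.Adj x y → G.Adj x z → G.Adj y z → False)
    (hst : ∀ x ∈ X, ∀ y ∈ X, ∀ z ∈ X, x ≠ y → x ≠ z → y ≠ z →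
      ¬G.Adj x y → ¬G.Adj x z → ¬G.Adj y z → False) :
    X.card ≤ 5 := by
  by_contra hc
  have h6 : 6 ≤ X.card := by omega
  obtain ⟨v, hv⟩ := Finset.card_pos.mp (by omega : 0 < X.card)
  set N := X.filter (G.Adj v) with hN
  by_cases hNc : 3 ≤ N.card
  · obtain ⟨x, y, z, hx, hy, hz, hxy, hxz, hyz⟩ := exists_three hNc
    rw [hN, Finset.mem_filter] at hx hy hz
    have nxy : ¬G.Adj x y := fun hadj => htf v hv x hx.1 y hy.1 hx.2 hy.2 hadj
    have nxz : ¬G.Adj x z := fun hadj => htf v hv x hx.1 z hz.1 hx.2 hz.2 hadj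
    have nyz : ¬G.Adj y z := fun hadj => htf v hv y hy.1 z hz.1 hy.2 hz.2 hadj
    exact hst x hx.1 y hy.1 z hz.1 hxy hxz hyz nxy nxz nyz
  · set M := X.filter (fun u => u ≠ v ∧ ¬G.Adj v u) with hM
    have hXsub : X ⊆ M ∪ N ∪ {v} := by
      intro u hu
      simp only [hM, hN, Finset.mem_union, Finset.mem_filter, Finset.mem_singleton]
      by_cases h1 : u = v
      · tauto
      · by_cases h2 : G.Adj v u <;> tauto
    have hMc : 3 ≤ M.card := by
      have := Finset.card_le_card hXsub
      have h1 := Finset.card_union_le (M ∪ N) {v}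
      have h2 := Finset.card_union_le M N
      simp only [Finset.card_singleton] at h1
      omega
    obtain ⟨x, y, z, hx, hy, hz, hxy, hxz, hyz⟩ := exists_three hMc
    rw [hM, Finset.mem_filter] at hx hy hz
    by_cases axy : G.Adj x y
    · by_cases axz : G.Adj x z
      · by_cases ayz : G.Adj y z
        · exact htf x hx.1 y hy.1 z hz.1 axy axz ayz
        · exact hst v hv y hy.1 z hz.1 (Ne.symm hy.2.1) (Ne.symm hz.2.1) hyz hy.2.2 hz.2.2 ayz
      · exact hst v hv x hx.1 z hz.1 (Ne.symm hx.2.1) (Ne.symm hz.2.1) hxz hx.2.2 hz.2.2 axz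
    · exact hst v hv x hx.1 y hy.1 (Ne.symm hx.2.1) (Ne.symm hy.2.1) hxy hx.2.2 hy.2.2 axy

/-- R(3,4) ≤ 9 : a set with no triangle and no stable 4-set has at most 8 vertices. -/
lemma R34 {X : Finset V}
    (htf : ∀ x ∈ X, ∀ y ∈ X, ∀ z ∈ X, G.Adj x y → G.Adj x z → G.Adj y z → False)
    (hst : ∀ w ∈ X, ∀ x ∈ X, ∀ y ∈ X, ∀ z ∈ X, w ≠ x → w ≠ y → w ≠ z → x ≠ y → x ≠ z → y ≠ z →
      ¬G.Adj w x → ¬G.Adj w y → ¬G.Adj w z → ¬G.Adj x y → ¬G.Adj x z → ¬G.Adj y z → False) :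
    X.card ≤ 8 := by
  by_contra hc
  obtain ⟨Y, hYX, hY⟩ := Finset.exists_subset_card_eq (by omega : 9 ≤ X.card)
  have htf' : ∀ x ∈ Y, ∀ y ∈ Y, ∀ z ∈ Y, G.Adj x y → G.Adj x z → G.Adj y z → False :=
    fun x hx y hy z hz => htf x (hYX hx) y (hYX hy) z (hYX hz)
  have hdeg : ∀ v ∈ Y, (Y.filter (G.Adj v)).card = 3 := by
    intro v hv
    set N := Y.filter (G.Adj v) with hN
    have hub : N.card ≤ 3 := by
      by_contra h4
      obtain ⟨a, b, c, d, ha, hb, hc', hd, hab, hac, had, hbc, hbd, hcd⟩ :=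
        exists_four (by omega : 4 ≤ N.card)
      rw [hN, Finset.mem_filter] at ha hb hc' hd
      have nab : ¬G.Adj a b := fun hadj => htf' v hv a ha.1 b hb.1 ha.2 hb.2 hadj
      have nac : ¬G.Adj a c := fun hadj => htf' v hv a ha.1 c hc'.1 ha.2 hc'.2 hadj
      have nad : ¬G.Adj a d := fun hadj => htf' v hv a ha.1 d hd.1 ha.2 hd.2 hadj
      have nbc : ¬G.Adj b c := fun hadj => htf' v hv b hb.1 c hc'.1 hb.2 hc'.2 hadj
      have nbd : ¬G.Adj b d := fun hadj => htf' v hv b hb.1 d hd.1 hb.2 hd.2 hadj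
      have ncd : ¬G.Adj c d := fun hadj => htf' v hv c hc'.1 d hd.1 hc'.2 hd.2 hadj
      exact hst a (hYX ha.1) b (hYX hb.1) c (hYX hc'.1) d (hYX hd.1)
        hab hac had hbc hbd hcd nab nac nad nbc nbd ncd
    have hlb : 3 ≤ N.card := by
      set M := Y.filter (fun u => u ≠ v ∧ ¬G.Adj v u) with hM
      have hM5 : M.card ≤ 5 := by
        apply R33 (G := G)
        · intro x hx y hy z hz
          rw [hM, Finset.mem_filter] at hx hy hz
          exact htf' x hx.1 y hy.1 z hz.1
        · intro x hx y hy z hz hxy hxz hyz nxy nxz nyz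
          rw [hM, Finset.mem_filter] at hx hy hz
          exact hst v (hYX hv) x (hYX hx.1) y (hYX hy.1) z (hYX hz.1)
            (Ne.symm hx.2.1) (Ne.symm hy.2.1) (Ne.symm hz.2.1) hxy hxz hyz
            hx.2.2 hy.2.2 hz.2.2 nxy nxz nyz
      have hYsub : Y ⊆ M ∪ N ∪ {v} := by
        intro u hu
        simp only [hM, hN, Finset.mem_union, Finset.mem_filter, Finset.mem_singleton]
        by_cases h1 : u = v
        · tauto
        · by_cases h2 : G.Adj v u <;> tauto
      have := Finset.card_le_card hYsub
      have h1 := Finset.card_union_le (M ∪ N) {v}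
      have h2 := Finset.card_union_le M N
      simp only [Finset.card_singleton] at h1
      omega
    omega
  have hsum : ∑ v ∈ Y, (Y.filter (G.Adj v)).card = 27 := by
    rw [Finset.sum_congr rfl hdeg, Finset.sum_const, hY]
    rfl
  have heven := even_sum_adj G Y
  rw [hsum] at heven
  obtain ⟨k, hk⟩ := heven
  omega


lemma exists_mem_not_mem {α : Type*} {s t : Finset α} (h : s.card < t.card) :
    ∃ e ∈ t, e ∉ s := by
  by_contra hc
  push_neg at hc
  exact absurd (Finset.card_le_card hc) (by omega)

lemma filter_pair [DecidableEq V] {Z : Finset V} {P : V → Prop} [DecidablePred P] {x y : V}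
    (heq : Z.filter P = {x, y}) :
    (y ∈ Z ∧ P y) ∧ (∀ u ∈ Z, P u → u = x ∨ u = y) := by
  constructor
  · have hy : y ∈ Z.filter P := by rw [heq]; simp
    exact Finset.mem_filter.mp hy
  · intro u hu hPu
    have hm : u ∈ Z.filter P := Finset.mem_filter.mpr ⟨hu, hPu⟩
    rw [heq] at hm
    simpa using hm

set_option maxHeartbeats 1000000 in
/-- The final case analysis on the four outside vertices. -/
lemma endgame {p q r op oq or₀ : V} {Z : Finset V}
    (hZ4 : Z.card = 4)
    (hZn : ∀ z ∈ Z, z ≠ p ∧ z ≠ q ∧ z ≠ r ∧ z ≠ op ∧ z ≠ oq ∧ z ≠ or₀)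
    (hpe : p ≠ op) (hqe : q ≠ oq) (hre : r ≠ or₀)
    (hpo : ¬G.Adj p op) (hqo : ¬G.Adj q oq) (hro : ¬G.Adj r or₀)
    (f1 : ∀ z ∈ Z, G.Adj op z ∨ G.Adj oq z ∨ G.Adj or₀ z)
    (f2p : ∀ z ∈ Z, G.Adj p z → ¬G.Adj oq z ∧ ¬G.Adj or₀ z)
    (f2q : ∀ z ∈ Z, G.Adj q z → ¬G.Adj op z ∧ ¬G.Adj or₀ z)
    (f2r : ∀ z ∈ Z, G.Adj r z → ¬G.Adj op z ∧ ¬G.Adj oq z)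
    (f3 : ∀ z ∈ Z, ∀ z' ∈ Z, G.Adj z z' →
      ¬(G.Adj op z ∧ G.Adj op z') ∧ ¬(G.Adj oq z ∧ G.Adj oq z') ∧ ¬(G.Adj or₀ z ∧ G.Adj or₀ z'))
    (f4p : (Z.filter (fun z => G.Adj op z)).card = 2)
    (f4q : (Z.filter (fun z => G.Adj oq z)).card = 2)
    (f4r : (Z.filter (fun z => G.Adj or₀ z)).card = 2)
    (hS4 : ∀ a b c d : V, a ≠ b → a ≠ c → a ≠ d → b ≠ c → b ≠ d → c ≠ d →
      ¬G.Adj a b → ¬G.Adj a c → ¬G.Adj a d → ¬G.Adj b c → ¬G.Adj b d → ¬G.Adj c d → False)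
    (hZT : ∀ z1 ∈ Z, ∀ z2 ∈ Z, ∀ z3 ∈ Z, G.Adj z1 z2 → G.Adj z1 z3 → G.Adj z2 z3 → False)
    (z1 : V) (hz1Z : z1 ∈ Z) (hz1q : G.Adj oq z1) (hz1r : G.Adj or₀ z1) : False := by
  by_cases hA : ∃ z ∈ Z, G.Adj op z ∧ G.Adj oq z ∧ G.Adj or₀ z
  -- Case A : some vertex adjacent to all of op, oq, or₀
  · obtain ⟨z', hz'Z, hz'p, hz'q, hz'r⟩ := hA
    obtain ⟨γ, hγne, hγeq⟩ := pair_of_card_two f4p (Finset.mem_filter.mpr ⟨hz'Z, hz'p⟩)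
    obtain ⟨β, hβne, hβeq⟩ := pair_of_card_two f4q (Finset.mem_filter.mpr ⟨hz'Z, hz'q⟩)
    obtain ⟨α, hαne, hαeq⟩ := pair_of_card_two f4r (Finset.mem_filter.mpr ⟨hz'Z, hz'r⟩)
    obtain ⟨⟨hγZ, hγadj⟩, hCop⟩ := filter_pair hγeq
    obtain ⟨⟨hβZ, hβadj⟩, hCoq⟩ := filter_pair hβeq
    obtain ⟨⟨hαZ, hαadj⟩, hCor⟩ := filter_pair hαeq
    -- distinctness of α β γ
    have hcard3 : ∀ u1 u2 u3 : V, ({u1, u2, u3} : Finset V).card ≤ 3 := by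
      intro u1 u2 u3
      apply le_trans (Finset.card_insert_le _ _)
      have h2 := Finset.card_insert_le u2 ({u3} : Finset V)
      simp only [Finset.card_singleton] at h2 ⊢
      omega
    have hab : α ≠ β := by
      intro heq
      obtain ⟨δ, hδZ, hδn⟩ := exists_mem_not_mem
        (lt_of_le_of_lt (hcard3 z' α γ) (by omega) : ({z', α, γ} : Finset V).card < Z.card)
      simp only [Finset.mem_insert, Finset.mem_singleton, not_or] at hδn
      obtain ⟨hd1, hd2, hd3⟩ := hδn
      rcases f1 δ hδZ with h | h | h
      · rcases hCop δ hδZ h with h' | h'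
        · exact hd1 h'
        · exact hd3 h'
      · rcases hCoq δ hδZ h with h' | h'
        · exact hd1 h'
        · exact hd2 (heq ▸ h')
      · rcases hCor δ hδZ h with h' | h'
        · exact hd1 h'
        · exact hd2 h'
    have hag : α ≠ γ := by
      intro heq
      obtain ⟨δ, hδZ, hδn⟩ := exists_mem_not_mem
        (lt_of_le_of_lt (hcard3 z' α β) (by omega) : ({z', α, β} : Finset V).card < Z.card)
      simp only [Finset.mem_insert, Finset.mem_singleton, not_or] at hδn
      obtain ⟨hd1, hd2, hd3⟩ := hδn
      rcases f1 δ hδZ with h | h | h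
      · rcases hCop δ hδZ h with h' | h'
        · exact hd1 h'
        · exact hd2 (heq ▸ h')
      · rcases hCoq δ hδZ h with h' | h'
        · exact hd1 h'
        · exact hd3 h'
      · rcases hCor δ hδZ h with h' | h'
        · exact hd1 h'
        · exact hd2 h'
    have hbg : β ≠ γ := by
      intro heq
      obtain ⟨δ, hδZ, hδn⟩ := exists_mem_not_mem
        (lt_of_le_of_lt (hcard3 z' β α) (by omega) : ({z', β, α} : Finset V).card < Z.card)
      simp only [Finset.mem_insert, Finset.mem_singleton, not_or] at hδn
      obtain ⟨hd1, hd2, hd3⟩ := hδn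
      rcases f1 δ hδZ with h | h | h
      · rcases hCop δ hδZ h with h' | h'
        · exact hd1 h'
        · exact hd2 (heq ▸ h')
      · rcases hCoq δ hδZ h with h' | h'
        · exact hd1 h'
        · exact hd2 h'
      · rcases hCor δ hδZ h with h' | h'
        · exact hd1 h'
        · exact hd3 h'
    -- non-adjacencies from column equalities
    have hnopα : ¬G.Adj op α := fun h => by
      rcases hCop α hαZ h with h' | h'
      · exact hαne h'
      · exact hag h'
    have hnoqα : ¬G.Adj oq α := fun h => by
      rcases hCoq α hαZ h with h' | h'
      · exact hαne h'
      · exact hab h'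
    have hnopβ : ¬G.Adj op β := fun h => by
      rcases hCop β hβZ h with h' | h'
      · exact hβne h'
      · exact hbg h'
    have hnorβ : ¬G.Adj or₀ β := fun h => by
      rcases hCor β hβZ h with h' | h'
      · exact hβne h'
      · exact hab (h'.symm)
    have hnoqγ : ¬G.Adj oq γ := fun h => by
      rcases hCoq γ hγZ h with h' | h'
      · exact hγne h'
      · exact hbg (h'.symm)
    have hnorγ : ¬G.Adj or₀ γ := fun h => by
      rcases hCor γ hγZ h with h' | h'
      · exact hγne h'
      · exact hag (h'.symm)
    obtain ⟨hαp, hαq, hαr, hαop', hαoq', hαor'⟩ := hZn α hαZ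
    obtain ⟨hβp, hβq, hβr, hβop', hβoq', hβor'⟩ := hZn β hβZ
    obtain ⟨hγp, hγq, hγr, hγop', hγoq', hγor'⟩ := hZn γ hγZ
    have hαβ : G.Adj α β := by
      by_contra hn
      exact hS4 p op α β hpe (Ne.symm hαp) (Ne.symm hβp) (Ne.symm hαop') (Ne.symm hβop') hab
        hpo (fun h => (f2p α hαZ h).2 hαadj) (fun h => (f2p β hβZ h).1 hβadj)
        hnopα hnopβ hn
    have hαγ : G.Adj α γ := by
      by_contra hn
      exact hS4 q oq α γ hqe (Ne.symm hαq) (Ne.symm hγq) (Ne.symm hαoq') (Ne.symm hγoq') hag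
        hqo (fun h => (f2q α hαZ h).2 hαadj) (fun h => (f2q γ hγZ h).1 hγadj)
        hnoqα hnoqγ hn
    have hβγ : G.Adj β γ := by
      by_contra hn
      exact hS4 r or₀ β γ hre (Ne.symm hβr) (Ne.symm hγr) (Ne.symm hβor') (Ne.symm hγor') hbg
        hro (fun h => (f2r β hβZ h).2 hβadj) (fun h => (f2r γ hγZ h).1 hγadj)
        hnorβ hnorγ hn
    exact hZT α hαZ β hβZ γ hγZ hαβ hαγ hβγ
  -- Case B : no vertex adjacent to all three
  · push_neg at hA
    have hz1op : ¬G.Adj op z1 := fun h => hA z1 hz1Z h hz1q hz1r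
    obtain ⟨β, hβne, hβeq⟩ := pair_of_card_two f4q (Finset.mem_filter.mpr ⟨hz1Z, hz1q⟩)
    obtain ⟨α, hαne, hαeq⟩ := pair_of_card_two f4r (Finset.mem_filter.mpr ⟨hz1Z, hz1r⟩)
    obtain ⟨⟨hβZ, hβadj⟩, hCoq⟩ := filter_pair hβeq
    obtain ⟨⟨hαZ, hαadj⟩, hCor⟩ := filter_pair hαeq
    obtain ⟨hz1p, hz1q', hz1r', hz1op', hz1oq', hz1or'⟩ := hZn z1 hz1Z
    obtain ⟨hαp, hαq, hαr, hαop', hαoq', hαor'⟩ := hZn α hαZ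
    obtain ⟨hβp, hβq, hβr, hβop', hβoq', hβor'⟩ := hZn β hβZ
    by_cases hab : α = β
    · -- subcase α = β
      subst hab
      have hnopα : ¬G.Adj op α := fun h => hA α hαZ h hβadj hαadj
      exact hS4 p op z1 α hpe (Ne.symm hz1p) (Ne.symm hαp) (Ne.symm hz1op') (Ne.symm hαop')
        (Ne.symm hαne) hpo
        (fun h => (f2p z1 hz1Z h).1 hz1q)
        (fun h => (f2p α hαZ h).2 hαadj)
        hz1op hnopα
        (fun h => ((f3 z1 hz1Z α hαZ h).2.1) ⟨hz1q, hβadj⟩)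
    · -- subcase α ≠ β : find the fourth vertex
      have hcard3 : ({z1, α, β} : Finset V).card = 3 := by
        rw [Finset.card_insert_of_notMem (by simp [Ne.symm hαne, Ne.symm hβne]),
          Finset.card_insert_of_notMem (by simp [hab]), Finset.card_singleton]
      obtain ⟨δ, hδZ, hδn⟩ := exists_mem_not_mem
        (by rw [hcard3, hZ4]; omega : ({z1, α, β} : Finset V).card < Z.card)
      simp only [Finset.mem_insert, Finset.mem_singleton, not_or] at hδn
      obtain ⟨hδ1, hδ2, hδ3⟩ := hδn
      have hδop : G.Adj op δ := by
        rcases f1 δ hδZ with h | h | h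
        · exact h
        · rcases hCoq δ hδZ h with h' | h'
          · exact absurd h' hδ1
          · exact absurd h' hδ3
        · rcases hCor δ hδZ h with h' | h'
          · exact absurd h' hδ1
          · exact absurd h' hδ2
      obtain ⟨ε, hεne, hεeq⟩ := pair_of_card_two f4p (Finset.mem_filter.mpr ⟨hδZ, hδop⟩)
      obtain ⟨⟨hεZ, hεadj⟩, hCop⟩ := filter_pair hεeq
      have hεz1 : ε ≠ z1 := fun h => hz1op (h ▸ hεadj)
      have hc4 : ({z1, α, β, δ} : Finset V).card = 4 := by
        rw [Finset.card_insert_of_notMem (by simp [Ne.symm hαne, Ne.symm hβne, Ne.symm hδ1]),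
          Finset.card_insert_of_notMem (by simp [hab, Ne.symm hδ2]),
          Finset.card_insert_of_notMem (by simp [Ne.symm hδ3]), Finset.card_singleton]
      have hZeq : ({z1, α, β, δ} : Finset V) = Z := by
        apply Finset.eq_of_subset_of_card_le
        · intro u hu
          simp only [Finset.mem_insert, Finset.mem_singleton] at hu
          rcases hu with rfl | rfl | rfl | rfl <;> assumption
        · rw [hZ4, hc4]
      have hεZ' : ε ∈ ({z1, α, β, δ} : Finset V) := by rw [hZeq]; exact hεZ
      simp only [Finset.mem_insert, Finset.mem_singleton] at hεZ'
      rcases hεZ' with h | h | h | h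
      · exact absurd h hεz1
      · -- ε = α : stable set {p, op, z1, β}
        subst h
        have hnopβ : ¬G.Adj op β := fun hadj => by
          rcases hCop β hβZ hadj with h' | h'
          · exact hδ3 h'.symm
          · exact hab h'.symm
        exact hS4 p op z1 β hpe (Ne.symm hz1p) (Ne.symm hβp) (Ne.symm hz1op') (Ne.symm hβop')
          (Ne.symm hβne) hpo
          (fun h => (f2p z1 hz1Z h).1 hz1q)
          (fun h => (f2p β hβZ h).1 hβadj)
          hz1op hnopβ
          (fun h => ((f3 z1 hz1Z β hβZ h).2.1) ⟨hz1q, hβadj⟩)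
      · -- ε = β : stable set {p, op, z1, α}
        subst h
        have hnopα : ¬G.Adj op α := fun hadj => by
          rcases hCop α hαZ hadj with h' | h'
          · exact hδ2 h'.symm
          · exact hab h'
        exact hS4 p op z1 α hpe (Ne.symm hz1p) (Ne.symm hαp) (Ne.symm hz1op') (Ne.symm hαop')
          (Ne.symm hαne) hpo
          (fun h => (f2p z1 hz1Z h).1 hz1q)
          (fun h => (f2p α hαZ h).2 hαadj)
          hz1op hnopα
          (fun h => ((f3 z1 hz1Z α hαZ h).2.2) ⟨hz1r, hαadj⟩)
      · exact absurd h hεne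


end TenVerticesAux

open TenVerticesAux in
set_option maxHeartbeats 4000000 in
/-- Every graph on at least 10 vertices contains a clique on four vertices, or a stable set
on four vertices, or two vertex-disjoint triangles. -/
theorem ten_vertices_K4_or_S4_or_two_triangles {V : Type*} [Fintype V] (G : SimpleGraph V)
    (h : 10 ≤ Fintype.card V) :
    (∃ s : Finset V, G.IsNClique 4 s) ∨
      (∃ s : Finset V, s.card = 4 ∧ G.IsStableSet (s : Set V)) ∨
      (∃ s t : Finset V, G.IsNClique 3 s ∧ G.IsNClique 3 t ∧ Disjoint s t) := by
  classical
  by_contra hcon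
  push_neg at hcon
  obtain ⟨hK4, hS4, hDT⟩ := hcon
  -- vertex-level versions of the three hypotheses
  have hK4' : ∀ a b c d : V, G.Adj a b → G.Adj a c → G.Adj a d → G.Adj b c → G.Adj b d →
      G.Adj c d → False := by
    intro a b c d hab hac had hbc hbd hcd
    have nab := G.ne_of_adj hab
    have nac := G.ne_of_adj hac
    have nad := G.ne_of_adj had
    have nbc := G.ne_of_adj hbc
    have nbd := G.ne_of_adj hbd
    have ncd := G.ne_of_adj hcd
    apply hK4 {a, b, c, d}
    rw [SimpleGraph.isNClique_iff]
    constructor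
    · intro x hx y hy hne
      simp only [Finset.coe_insert, Set.mem_insert_iff, Finset.coe_singleton,
        Set.mem_singleton_iff] at hx hy
      rcases hx with rfl | rfl | rfl | rfl <;> rcases hy with rfl | rfl | rfl | rfl <;>
        first
          | exact absurd rfl hne
          | exact hab | exact hac | exact had | exact hbc | exact hbd | exact hcd
          | exact G.adj_symm hab | exact G.adj_symm hac | exact G.adj_symm had
          | exact G.adj_symm hbc | exact G.adj_symm hbd | exact G.adj_symm hcd
    · rw [Finset.card_insert_of_notMem (by simp [nab, nac, nad]),
        Finset.card_insert_of_notMem (by simp [nbc, nbd]),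
        Finset.card_insert_of_notMem (by simp [ncd]), Finset.card_singleton]
  have hS4v : ∀ a b c d : V, a ≠ b → a ≠ c → a ≠ d → b ≠ c → b ≠ d → c ≠ d →
      ¬G.Adj a b → ¬G.Adj a c → ¬G.Adj a d → ¬G.Adj b c → ¬G.Adj b d → ¬G.Adj c d → False := by
    intro a b c d nab nac nad nbc nbd ncd hab hac had hbc hbd hcd
    apply hS4 {a, b, c, d}
    · rw [Finset.card_insert_of_notMem (by simp [nab, nac, nad]),
        Finset.card_insert_of_notMem (by simp [nbc, nbd]),
        Finset.card_insert_of_notMem (by simp [ncd]), Finset.card_singleton]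
    · intro x hx y hy hne
      simp only [Finset.coe_insert, Set.mem_insert_iff, Finset.coe_singleton,
        Set.mem_singleton_iff] at hx hy
      rcases hx with rfl | rfl | rfl | rfl <;> rcases hy with rfl | rfl | rfl | rfl <;>
        first
          | exact absurd rfl hne
          | exact hab | exact hac | exact had | exact hbc | exact hbd | exact hcd
          | exact fun hh => hab (G.adj_symm hh) | exact fun hh => hac (G.adj_symm hh)
          | exact fun hh => had (G.adj_symm hh) | exact fun hh => hbc (G.adj_symm hh)
          | exact fun hh => hbd (G.adj_symm hh) | exact fun hh => hcd (G.adj_symm hh)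
  have hDTv : ∀ x y z x' y' z' : V, G.Adj x y → G.Adj x z → G.Adj y z →
      G.Adj x' y' → G.Adj x' z' → G.Adj y' z' →
      x ≠ x' → x ≠ y' → x ≠ z' → y ≠ x' → y ≠ y' → y ≠ z' → z ≠ x' → z ≠ y' → z ≠ z' → False := by
    intro x y z x' y' z' h1 h2 h3 h4 h5 h6 n1 n2 n3 n4 n5 n6 n7 n8 n9
    apply hDT {x, y, z} {x', y', z'} (SimpleGraph.is3Clique_triple_iff.mpr ⟨h1, h2, h3⟩)
      (SimpleGraph.is3Clique_triple_iff.mpr ⟨h4, h5, h6⟩)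
    rw [Finset.disjoint_left]
    intro u hu hu'
    simp only [Finset.mem_insert, Finset.mem_singleton] at hu hu'
    rcases hu with rfl | rfl | rfl <;> rcases hu' with rfl | rfl | rfl <;>
      first
      | exact n1 rfl
      | exact n2 rfl
      | exact n3 rfl
      | exact n4 rfl
      | exact n5 rfl
      | exact n6 rfl
      | exact n7 rfl
      | exact n8 rfl
      | exact n9 rfl
  -- every 9 vertices contain a triangle
  have htri9 : ∀ X : Finset V, 9 ≤ X.card →
      ∃ x y z, x ∈ X ∧ y ∈ X ∧ z ∈ X ∧ G.Adj x y ∧ G.Adj x z ∧ G.Adj y z := by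
    intro X hX
    by_contra htri
    push_neg at htri
    have hle : X.card ≤ 8 := by
      apply R34 (G := G)
      · intro x hx y hy z hz hxy hxz hyz
        exact htri x y z hx hy hz hxy hxz hyz
      · intro w _ x _ y _ z _ n1 n2 n3 n4 n5 n6 a1 a2 a3 a4 a5 a6
        exact hS4v w x y z n1 n2 n3 n4 n5 n6 a1 a2 a3 a4 a5 a6
    omega
  have hcardV : (Finset.univ : Finset V).card = Fintype.card V := Finset.card_univ
  have avoid : ∀ v : V, ∃ x y z : V, G.Adj x y ∧ G.Adj x z ∧ G.Adj y z ∧ x ≠ v ∧ y ≠ v ∧ z ≠ v := by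
    intro v
    obtain ⟨x, y, z, hx, hy, hz, h1, h2, h3⟩ := htri9 (Finset.univ.erase v)
      (by rw [Finset.card_erase_of_mem (Finset.mem_univ v)]; omega)
    exact ⟨x, y, z, h1, h2, h3, Finset.ne_of_mem_erase hx, Finset.ne_of_mem_erase hy,
      Finset.ne_of_mem_erase hz⟩
  -- helpers for reordering triangles
  have extract1 : ∀ x y z u : V, G.Adj x y → G.Adj x z → G.Adj y z →
      (x = u ∨ y = u ∨ z = u) →
      ∃ s t, (s = x ∨ s = y ∨ s = z) ∧ (t = x ∨ t = y ∨ t = z) ∧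
        G.Adj u s ∧ G.Adj u t ∧ G.Adj s t := by
    intro x y z u hxy hxz hyz hu
    rcases hu with rfl | rfl | rfl
    · exact ⟨y, z, Or.inr (Or.inl rfl), Or.inr (Or.inr rfl), hxy, hxz, hyz⟩
    · exact ⟨x, z, Or.inl rfl, Or.inr (Or.inr rfl), G.adj_symm hxy, hyz, hxz⟩
    · exact ⟨x, y, Or.inl rfl, Or.inr (Or.inl rfl), G.adj_symm hxz, G.adj_symm hyz, hxy⟩
  have extract2 : ∀ x y z u w : V, G.Adj x y → G.Adj x z → G.Adj y z →
      (x = u ∨ y = u ∨ z = u) → (x = w ∨ y = w ∨ z = w) → u ≠ w →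
      ∃ t, (t = x ∨ t = y ∨ t = z) ∧ G.Adj u w ∧ G.Adj u t ∧ G.Adj w t := by
    intro x y z u w hxy hxz hyz hu hw hne
    rcases hu with rfl | rfl | rfl <;> rcases hw with rfl | rfl | rfl
    · exact absurd rfl hne
    · exact ⟨z, Or.inr (Or.inr rfl), hxy, hxz, hyz⟩
    · exact ⟨y, Or.inr (Or.inl rfl), hxz, hxy, G.adj_symm hyz⟩
    · exact ⟨z, Or.inr (Or.inr rfl), G.adj_symm hxy, hyz, hxz⟩
    · exact absurd rfl hne
    · exact ⟨x, Or.inl rfl, hyz, G.adj_symm hxy, G.adj_symm hxz⟩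
    · exact ⟨y, Or.inr (Or.inl rfl), G.adj_symm hxz, G.adj_symm hyz, hxy⟩
    · exact ⟨x, Or.inl rfl, G.adj_symm hyz, G.adj_symm hxz, G.adj_symm hxy⟩
    · exact absurd rfl hne
  -- Phase 3 : two triangles sharing exactly one vertex
  have G1 : ∃ v A B C D : V, G.Adj v A ∧ G.Adj v B ∧ G.Adj A B ∧
      G.Adj v C ∧ G.Adj v D ∧ G.Adj C D ∧ A ≠ C ∧ A ≠ D ∧ B ≠ C ∧ B ≠ D := by
    obtain ⟨a0, b0, c0, _, _, _, h1, h2, h3⟩ := htri9 Finset.univ (by omega)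
    obtain ⟨x1, y1, z1, tA1, tA2, tA3, hxa, hya, hza⟩ := avoid a0
    by_cases hb : x1 = b0 ∨ y1 = b0 ∨ z1 = b0
    · by_cases hcc : x1 = c0 ∨ y1 = c0 ∨ z1 = c0
      · -- A ⊇ {b0, c0}
        obtain ⟨x, hxmem, hb0c0, hbx, hcx⟩ :=
          extract2 x1 y1 z1 b0 c0 tA1 tA2 tA3 hb hcc (G.ne_of_adj h3)
        have hxa0 : x ≠ a0 := by rcases hxmem with rfl | rfl | rfl <;> assumption
        obtain ⟨x2, y2, z2, tB1, tB2, tB3, hxb, hyb, hzb⟩ := avoid b0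
        by_cases hcB : x2 = c0 ∨ y2 = c0 ∨ z2 = c0
        · by_cases haB : x2 = a0 ∨ y2 = a0 ∨ z2 = a0
          · obtain ⟨t, htmem, hc0a0, hc0t, ha0t⟩ :=
              extract2 x2 y2 z2 c0 a0 tB1 tB2 tB3 hcB haB (G.ne_of_adj h2).symm
            have htb0 : t ≠ b0 := by rcases htmem with rfl | rfl | rfl <;> assumption
            by_cases htx : t = x
            · exact ((hK4' a0 b0 c0 x h1 h2 (htx ▸ ha0t) h3 hbx hcx)).elim
            · exact ⟨c0, b0, x, a0, t, G.adj_symm h3, hcx, hbx, hc0a0, hc0t, ha0t,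
                (G.ne_of_adj h1).symm, htb0.symm, hxa0, fun hh => htx hh.symm⟩
          · push_neg at haB
            obtain ⟨s, t, hsmem, htmem, hc0s, hc0t, hst⟩ :=
              extract1 x2 y2 z2 c0 tB1 tB2 tB3 hcB
            have hsa : s ≠ a0 := by rcases hsmem with rfl | rfl | rfl <;> tauto
            have hta : t ≠ a0 := by rcases htmem with rfl | rfl | rfl <;> tauto
            have hsb : s ≠ b0 := by rcases hsmem with rfl | rfl | rfl <;> assumption
            have htb : t ≠ b0 := by rcases htmem with rfl | rfl | rfl <;> assumption
            exact ⟨c0, a0, b0, s, t, G.adj_symm h2, G.adj_symm h3, h1, hc0s, hc0t, hst,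
              hsa.symm, hta.symm, hsb.symm, htb.symm⟩
        · push_neg at hcB
          have haB : x2 = a0 ∨ y2 = a0 ∨ z2 = a0 := by
            by_contra hcn
            push_neg at hcn
            exact hDTv x2 y2 z2 a0 b0 c0 tB1 tB2 tB3 h1 h2 h3
              hcn.1 hxb hcB.1 hcn.2.1 hyb hcB.2.1 hcn.2.2 hzb hcB.2.2
          have hxB : x2 = x ∨ y2 = x ∨ z2 = x := by
            by_contra hcn
            push_neg at hcn
            exact hDTv x2 y2 z2 b0 c0 x tB1 tB2 tB3 h3 hbx hcx
              hxb hcB.1 hcn.1 hyb hcB.2.1 hcn.2.1 hzb hcB.2.2 hcn.2.2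
          obtain ⟨t, htmem, ha0x, ha0t, hxt⟩ :=
            extract2 x2 y2 z2 a0 x tB1 tB2 tB3 haB hxB hxa0.symm
          have htb : t ≠ b0 := by rcases htmem with rfl | rfl | rfl <;> assumption
          have htc : t ≠ c0 := by rcases htmem with rfl | rfl | rfl <;> tauto
          exact ⟨a0, b0, c0, x, t, h1, h2, h3, ha0x, ha0t, hxt,
            G.ne_of_adj hbx, htb.symm, G.ne_of_adj hcx, htc.symm⟩
      · -- A ∩ T1 = {b0}
        push_neg at hcc
        obtain ⟨s, t, hsmem, htmem, hbs, hbt, hst⟩ := extract1 x1 y1 z1 b0 tA1 tA2 tA3 hb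
        have hsa : s ≠ a0 := by rcases hsmem with rfl | rfl | rfl <;> assumption
        have hta : t ≠ a0 := by rcases htmem with rfl | rfl | rfl <;> assumption
        have hsc : s ≠ c0 := by rcases hsmem with rfl | rfl | rfl <;> tauto
        have htc : t ≠ c0 := by rcases htmem with rfl | rfl | rfl <;> tauto
        exact ⟨b0, a0, c0, s, t, G.adj_symm h1, h3, h2, hbs, hbt, hst,
          hsa.symm, hta.symm, hsc.symm, htc.symm⟩
    · by_cases hcc : x1 = c0 ∨ y1 = c0 ∨ z1 = c0
      · push_neg at hb
        obtain ⟨s, t, hsmem, htmem, hcs, hct, hst⟩ := extract1 x1 y1 z1 c0 tA1 tA2 tA3 hcc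
        have hsa : s ≠ a0 := by rcases hsmem with rfl | rfl | rfl <;> assumption
        have hta : t ≠ a0 := by rcases htmem with rfl | rfl | rfl <;> assumption
        have hsb : s ≠ b0 := by rcases hsmem with rfl | rfl | rfl <;> tauto
        have htb : t ≠ b0 := by rcases htmem with rfl | rfl | rfl <;> tauto
        exact ⟨c0, a0, b0, s, t, G.adj_symm h2, G.adj_symm h3, h1, hcs, hct, hst,
          hsa.symm, hta.symm, hsb.symm, htb.symm⟩
      · push_neg at hb hcc
        exact (hDTv x1 y1 z1 a0 b0 c0 tA1 tA2 tA3 h1 h2 h3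
          hxa hb.1 hcc.1 hya hb.2.1 hcc.2.1 hza hb.2.2 hcc.2.2).elim
  -- Phase 4 : build the 6-vertex configuration
  obtain ⟨v, A0, B0, C0, D0, hvA, hvB, hAB, hvC, hvD, hCD, hAC, hAD, hBC, hBD⟩ := G1
  obtain ⟨x3, y3, z3, tR1, tR2, tR3, hxv, hyv, hzv⟩ := avoid v
  have hmeetP : x3 = A0 ∨ y3 = A0 ∨ z3 = A0 ∨ x3 = B0 ∨ y3 = B0 ∨ z3 = B0 := by
    by_contra hcn
    push_neg at hcn
    exact hDTv x3 y3 z3 v A0 B0 tR1 tR2 tR3 hvA hvB hAB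
      hxv hcn.1 hcn.2.2.2.1 hyv hcn.2.1 hcn.2.2.2.2.1 hzv hcn.2.2.1 hcn.2.2.2.2.2
  have hmeetQ : x3 = C0 ∨ y3 = C0 ∨ z3 = C0 ∨ x3 = D0 ∨ y3 = D0 ∨ z3 = D0 := by
    by_contra hcn
    push_neg at hcn
    exact hDTv x3 y3 z3 v C0 D0 tR1 tR2 tR3 hvC hvD hCD
      hxv hcn.1 hcn.2.2.2.1 hyv hcn.2.1 hcn.2.2.2.2.1 hzv hcn.2.2.1 hcn.2.2.2.2.2
  have hsw1 : ∃ a b : V, G.Adj v a ∧ G.Adj v b ∧ G.Adj a b ∧ a ≠ C0 ∧ a ≠ D0 ∧ b ≠ C0 ∧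
      b ≠ D0 ∧ (x3 = a ∨ y3 = a ∨ z3 = a) := by
    rcases hmeetP with hh | hh | hh | hh | hh | hh
    · exact ⟨A0, B0, hvA, hvB, hAB, hAC, hAD, hBC, hBD, Or.inl hh⟩
    · exact ⟨A0, B0, hvA, hvB, hAB, hAC, hAD, hBC, hBD, Or.inr (Or.inl hh)⟩
    · exact ⟨A0, B0, hvA, hvB, hAB, hAC, hAD, hBC, hBD, Or.inr (Or.inr hh)⟩
    · exact ⟨B0, A0, hvB, hvA, G.adj_symm hAB, hBC, hBD, hAC, hAD, Or.inl hh⟩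
    · exact ⟨B0, A0, hvB, hvA, G.adj_symm hAB, hBC, hBD, hAC, hAD, Or.inr (Or.inl hh)⟩
    · exact ⟨B0, A0, hvB, hvA, G.adj_symm hAB, hBC, hBD, hAC, hAD, Or.inr (Or.inr hh)⟩
  obtain ⟨a, b, hva, hvb, hab, haC, haD, hbC, hbD, haR⟩ := hsw1
  have hsw2 : ∃ c d : V, G.Adj v c ∧ G.Adj v d ∧ G.Adj c d ∧ a ≠ c ∧ a ≠ d ∧ b ≠ c ∧
      b ≠ d ∧ (x3 = c ∨ y3 = c ∨ z3 = c) := by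
    rcases hmeetQ with hh | hh | hh | hh | hh | hh
    · exact ⟨C0, D0, hvC, hvD, hCD, haC, haD, hbC, hbD, Or.inl hh⟩
    · exact ⟨C0, D0, hvC, hvD, hCD, haC, haD, hbC, hbD, Or.inr (Or.inl hh)⟩
    · exact ⟨C0, D0, hvC, hvD, hCD, haC, haD, hbC, hbD, Or.inr (Or.inr hh)⟩
    · exact ⟨D0, C0, hvD, hvC, G.adj_symm hCD, haD, haC, hbD, hbC, Or.inl hh⟩
    · exact ⟨D0, C0, hvD, hvC, G.adj_symm hCD, haD, haC, hbD, hbC, Or.inr (Or.inl hh)⟩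
    · exact ⟨D0, C0, hvD, hvC, G.adj_symm hCD, haD, haC, hbD, hbC, Or.inr (Or.inr hh)⟩
  obtain ⟨c, d, hvc, hvd, hcd, hac, had, hbc, hbd, hcR⟩ := hsw2
  obtain ⟨w, hwmem, hacAdj, haw, hcw⟩ := extract2 x3 y3 z3 a c tR1 tR2 tR3 haR hcR hac
  have hwv : w ≠ v := by rcases hwmem with rfl | rfl | rfl <;> assumption
  have hwb : w ≠ b := by
    intro heq
    exact hK4' v a b c hva hvb hvc hab hacAdj (G.adj_symm (heq ▸ hcw))
  have hwd : w ≠ d := by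
    intro heq
    exact hK4' v a c d hva hvc hvd hacAdj (heq ▸ haw) hcd
  -- non-edges
  have hnvw : ¬G.Adj v w := fun hh => hK4' v a c w hva hvc hh hacAdj haw hcw
  have hnbw : ¬G.Adj b w := fun hh => hDTv a b w v c d hab haw hh hvc hvd hcd
    (G.ne_of_adj hva).symm hac had (G.ne_of_adj hvb).symm hbc hbd
    hwv (G.ne_of_adj hcw).symm hwd
  have hndw : ¬G.Adj d w := fun hh => hDTv c d w v a b hcd hcw hh hva hvb hab
    (G.ne_of_adj hvc).symm (Ne.symm hac) (Ne.symm hbc)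
    (G.ne_of_adj hvd).symm (Ne.symm had) (Ne.symm hbd)
    hwv (G.ne_of_adj haw).symm hwb
  have hnbd : ¬G.Adj b d := fun hh => hDTv v b d a c w hvb hvd hh hacAdj haw hcw
    (G.ne_of_adj hva) (G.ne_of_adj hvc) (Ne.symm hwv)
    (G.ne_of_adj hab).symm hbc (Ne.symm hwb)
    (Ne.symm had) (G.ne_of_adj hcd).symm (Ne.symm hwd)
  have hnbc : ¬G.Adj b c := fun hh => hK4' v a b c hva hvb hvc hab hacAdj hh
  have hnad : ¬G.Adj a d := fun hh => hK4' v a c d hva hvc hvd hacAdj hh hcd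
  -- name the basic distinctness facts
  have nva : v ≠ a := G.ne_of_adj hva
  have nvb : v ≠ b := G.ne_of_adj hvb
  have nvc : v ≠ c := G.ne_of_adj hvc
  have nvd : v ≠ d := G.ne_of_adj hvd
  have nab : a ≠ b := G.ne_of_adj hab
  have ncd : c ≠ d := G.ne_of_adj hcd
  have naw : a ≠ w := G.ne_of_adj haw
  have ncw : c ≠ w := G.ne_of_adj hcw
  -- Phase 5 : every triangle has at least two vertices among {v, a, c}
  have htri2 : ∀ x y z : V, G.Adj x y → G.Adj x z → G.Adj y z →
      (x ≠ v ∧ x ≠ a ∧ x ≠ c) → (y ≠ v ∧ y ≠ a ∧ y ≠ c) → False := by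
    intro x y z hxy hxz hyz hxS hyS
    obtain ⟨hxv', hxa', hxc'⟩ := hxS
    obtain ⟨hyv', hya', hyc'⟩ := hyS
    by_cases hzv' : z = v
    · subst hzv'
      by_cases hxw : x = w
      · exact hnvw (G.adj_symm (hxw ▸ hxz))
      · by_cases hyw : y = w
        · exact hnvw (G.adj_symm (hyw ▸ hyz))
        · exact hDTv x y z a c w hxy hxz hyz hacAdj haw hcw
            hxa' hxc' hxw hya' hyc' hyw nva nvc (Ne.symm hwv)
    · by_cases hza' : z = a
      · subst hza'
        by_cases hxd : x = d
        · exact hnad (G.adj_symm (hxd ▸ hxz))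
        · by_cases hyd : y = d
          · exact hnad (G.adj_symm (hyd ▸ hyz))
          · exact hDTv x y z v c d hxy hxz hyz hvc hvd hcd
              hxv' hxc' hxd hyv' hyc' hyd (Ne.symm nva) hac had
      · by_cases hzc' : z = c
        · subst hzc'
          by_cases hxb : x = b
          · exact hnbc (hxb ▸ hxz)
          · by_cases hyb : y = b
            · exact hnbc (hyb ▸ hyz)
            · exact hDTv x y z v a b hxy hxz hyz hva hvb hab
                hxv' hxa' hxb hyv' hya' hyb (Ne.symm nvc) (Ne.symm hac) (Ne.symm hbc)
        · have hP : x = b ∨ y = b ∨ z = b := by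
            by_contra hcn
            push_neg at hcn
            exact hDTv x y z v a b hxy hxz hyz hva hvb hab
              hxv' hxa' hcn.1 hyv' hya' hcn.2.1 hzv' hza' hcn.2.2
          have hQ : x = d ∨ y = d ∨ z = d := by
            by_contra hcn
            push_neg at hcn
            exact hDTv x y z v c d hxy hxz hyz hvc hvd hcd
              hxv' hxc' hcn.1 hyv' hyc' hcn.2.1 hzv' hzc' hcn.2.2
          rcases hP with hh | hh | hh <;> rcases hQ with hh' | hh' | hh'
          · exact hbd (hh ▸ hh' ▸ rfl : b = d)
          · exact hnbd (hh ▸ hh' ▸ hxy)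
          · exact hnbd (hh ▸ hh' ▸ hxz)
          · exact hnbd (hh' ▸ hh ▸ (G.adj_symm hxy))
          · exact hbd (hh ▸ hh' ▸ rfl : b = d)
          · exact hnbd (hh ▸ hh' ▸ hyz)
          · exact hnbd (hh' ▸ hh ▸ (G.adj_symm hxz))
          · exact hnbd (hh' ▸ hh ▸ (G.adj_symm hyz))
          · exact hbd (hh ▸ hh' ▸ rfl : b = d)
  have nvw : v ≠ w := Ne.symm hwv
  have nbw : b ≠ w := Ne.symm hwb
  have ndw : d ≠ w := Ne.symm hwd
  -- triangle-free facts for pairs from {v, a, c}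
  have hTF2va : ∀ x y z : V, G.Adj x y → G.Adj x z → G.Adj y z → x ≠ v → x ≠ a →
      y ≠ v → y ≠ a → z ≠ v → z ≠ a → False := by
    intro x y z hxy hxz hyz hxv' hxa' hyv' hya' hzv' hza'
    by_cases hxc' : x = c
    · have hyc' : y ≠ c := fun hh => (G.ne_of_adj hxy) (hxc'.trans hh.symm)
      have hzc' : z ≠ c := fun hh => (G.ne_of_adj hxz) (hxc'.trans hh.symm)
      exact htri2 y z x hyz (G.adj_symm hxy) (G.adj_symm hxz) ⟨hyv', hya', hyc'⟩ ⟨hzv', hza', hzc'⟩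
    · by_cases hyc' : y = c
      · have hzc' : z ≠ c := fun hh => (G.ne_of_adj hyz) (hyc'.trans hh.symm)
        exact htri2 x z y hxz hxy (G.adj_symm hyz) ⟨hxv', hxa', hxc'⟩ ⟨hzv', hza', hzc'⟩
      · exact htri2 x y z hxy hxz hyz ⟨hxv', hxa', hxc'⟩ ⟨hyv', hya', hyc'⟩
  have hTF2vc : ∀ x y z : V, G.Adj x y → G.Adj x z → G.Adj y z → x ≠ v → x ≠ c →
      y ≠ v → y ≠ c → z ≠ v → z ≠ c → False := by
    intro x y z hxy hxz hyz hxv' hxc' hyv' hyc' hzv' hzc'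
    by_cases hxa' : x = a
    · have hya' : y ≠ a := fun hh => (G.ne_of_adj hxy) (hxa'.trans hh.symm)
      have hza' : z ≠ a := fun hh => (G.ne_of_adj hxz) (hxa'.trans hh.symm)
      exact htri2 y z x hyz (G.adj_symm hxy) (G.adj_symm hxz) ⟨hyv', hya', hyc'⟩ ⟨hzv', hza', hzc'⟩
    · by_cases hya' : y = a
      · have hza' : z ≠ a := fun hh => (G.ne_of_adj hyz) (hya'.trans hh.symm)
        exact htri2 x z y hxz hxy (G.adj_symm hyz) ⟨hxv', hxa', hxc'⟩ ⟨hzv', hza', hzc'⟩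
      · exact htri2 x y z hxy hxz hyz ⟨hxv', hxa', hxc'⟩ ⟨hyv', hya', hyc'⟩
  have hTF2ac : ∀ x y z : V, G.Adj x y → G.Adj x z → G.Adj y z → x ≠ a → x ≠ c →
      y ≠ a → y ≠ c → z ≠ a → z ≠ c → False := by
    intro x y z hxy hxz hyz hxa' hxc' hya' hyc' hza' hzc'
    by_cases hxv' : x = v
    · have hyv' : y ≠ v := fun hh => (G.ne_of_adj hxy) (hxv'.trans hh.symm)
      have hzv' : z ≠ v := fun hh => (G.ne_of_adj hxz) (hxv'.trans hh.symm)
      exact htri2 y z x hyz (G.adj_symm hxy) (G.adj_symm hxz) ⟨hyv', hya', hyc'⟩ ⟨hzv', hza', hzc'⟩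
    · by_cases hyv' : y = v
      · have hzv' : z ≠ v := fun hh => (G.ne_of_adj hyz) (hyv'.trans hh.symm)
        exact htri2 x z y hxz hxy (G.adj_symm hyz) ⟨hxv', hxa', hxc'⟩ ⟨hzv', hza', hzc'⟩
      · exact htri2 x y z hxy hxz hyz ⟨hxv', hxa', hxc'⟩ ⟨hyv', hya', hyc'⟩
  -- the number of vertices is exactly 10
  have hn10 : Fintype.card V = 10 := by
    have h8 : (Finset.univ \ ({v, a} : Finset V)).card ≤ 8 := by
      apply R34 (G := G)
      · intro x hx y hy z hz hxy hxz hyz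
        simp only [Finset.mem_sdiff, Finset.mem_univ, true_and, Finset.mem_insert,
          Finset.mem_singleton, not_or] at hx hy hz
        exact hTF2va x y z hxy hxz hyz hx.1 hx.2 hy.1 hy.2 hz.1 hz.2
      · intro w' _ x _ y _ z _ n1 n2 n3 n4 n5 n6 a1 a2 a3 a4 a5 a6
        exact hS4v w' x y z n1 n2 n3 n4 n5 n6 a1 a2 a3 a4 a5 a6
    rw [Finset.card_sdiff_of_subset (Finset.subset_univ _), hcardV,
      Finset.card_insert_of_notMem (by simp [nva]), Finset.card_singleton] at h8
    omega
  -- the four outside vertices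
  have hZmem : ∀ z : V, z ∈ Finset.univ \ ({v, a, b, c, d, w} : Finset V) ↔
      z ≠ v ∧ z ≠ a ∧ z ≠ b ∧ z ≠ c ∧ z ≠ d ∧ z ≠ w := by
    intro z
    simp only [Finset.mem_sdiff, Finset.mem_univ, true_and, Finset.mem_insert,
      Finset.mem_singleton, not_or]
  have hc6 : ({v, a, b, c, d, w} : Finset V).card = 6 := by
    rw [Finset.card_insert_of_notMem (by simp [nva, nvb, nvc, nvd, nvw]),
      Finset.card_insert_of_notMem (by simp [nab, hac, had, naw]),
      Finset.card_insert_of_notMem (by simp [hbc, hbd, nbw]),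
      Finset.card_insert_of_notMem (by simp [ncd, ncw]),
      Finset.card_insert_of_notMem (by simp [ndw]), Finset.card_singleton]
  have hZ4 : (Finset.univ \ ({v, a, b, c, d, w} : Finset V)).card = 4 := by
    rw [Finset.card_sdiff_of_subset (Finset.subset_univ _), hcardV, hn10, hc6]
  have hZS : ∀ z : V, z ∈ Finset.univ \ ({v, a, b, c, d, w} : Finset V) →
      z ≠ v ∧ z ≠ a ∧ z ≠ c := by
    intro z hz
    obtain ⟨e1, e2, e3, e4, e5, e6⟩ := (hZmem z).mp hz
    exact ⟨e1, e2, e4⟩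
  have bS : b ≠ v ∧ b ≠ a ∧ b ≠ c := ⟨Ne.symm nvb, Ne.symm nab, hbc⟩
  have dS : d ≠ v ∧ d ≠ a ∧ d ≠ c := ⟨Ne.symm nvd, Ne.symm had, Ne.symm ncd⟩
  have wS : w ≠ v ∧ w ≠ a ∧ w ≠ c := ⟨hwv, Ne.symm naw, Ne.symm ncw⟩
  have hf1 : ∀ z ∈ Finset.univ \ ({v, a, b, c, d, w} : Finset V),
      G.Adj b z ∨ G.Adj d z ∨ G.Adj w z := by
    intro z hz
    obtain ⟨e1, e2, e3, e4, e5, e6⟩ := (hZmem z).mp hz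
    by_contra hcn
    push_neg at hcn
    exact hS4v z b d w e3 e5 e6 hbd nbw ndw
      (fun hh => hcn.1 (G.adj_symm hh)) (fun hh => hcn.2.1 (G.adj_symm hh))
      (fun hh => hcn.2.2 (G.adj_symm hh)) hnbd hnbw hndw
  have hf2v : ∀ z ∈ Finset.univ \ ({v, a, b, c, d, w} : Finset V),
      G.Adj v z → ¬G.Adj d z ∧ ¬G.Adj b z := by
    intro z hz hvz
    constructor
    · intro hdz
      exact htri2 z d v (G.adj_symm hdz) (G.adj_symm hvz) (G.adj_symm hvd) (hZS z hz) dS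
    · intro hbz
      exact htri2 z b v (G.adj_symm hbz) (G.adj_symm hvz) (G.adj_symm hvb) (hZS z hz) bS
  have hf2a : ∀ z ∈ Finset.univ \ ({v, a, b, c, d, w} : Finset V),
      G.Adj a z → ¬G.Adj w z ∧ ¬G.Adj b z := by
    intro z hz haz
    constructor
    · intro hwz
      exact htri2 z w a (G.adj_symm hwz) (G.adj_symm haz) (G.adj_symm haw) (hZS z hz) wS
    · intro hbz
      exact htri2 z b a (G.adj_symm hbz) (G.adj_symm haz) (G.adj_symm hab) (hZS z hz) bS
  have hf2c : ∀ z ∈ Finset.univ \ ({v, a, b, c, d, w} : Finset V),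
      G.Adj c z → ¬G.Adj w z ∧ ¬G.Adj d z := by
    intro z hz hcz
    constructor
    · intro hwz
      exact htri2 z w c (G.adj_symm hwz) (G.adj_symm hcz) (G.adj_symm hcw) (hZS z hz) wS
    · intro hdz
      exact htri2 z d c (G.adj_symm hdz) (G.adj_symm hcz) (G.adj_symm hcd) (hZS z hz) dS
  have hf3 : ∀ z ∈ Finset.univ \ ({v, a, b, c, d, w} : Finset V),
      ∀ z' ∈ Finset.univ \ ({v, a, b, c, d, w} : Finset V), G.Adj z z' →
      ¬(G.Adj b z ∧ G.Adj b z') ∧ ¬(G.Adj d z ∧ G.Adj d z') ∧ ¬(G.Adj w z ∧ G.Adj w z') := by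
    intro z hz z' hz' hzz'
    refine ⟨fun hh => ?_, fun hh => ?_, fun hh => ?_⟩
    · exact htri2 z z' b hzz' (G.adj_symm hh.1) (G.adj_symm hh.2) (hZS z hz) (hZS z' hz')
    · exact htri2 z z' d hzz' (G.adj_symm hh.1) (G.adj_symm hh.2) (hZS z hz) (hZS z' hz')
    · exact htri2 z z' w hzz' (G.adj_symm hh.1) (G.adj_symm hh.2) (hZS z hz) (hZS z' hz')
  have hZT : ∀ z1 ∈ Finset.univ \ ({v, a, b, c, d, w} : Finset V),
      ∀ z2 ∈ Finset.univ \ ({v, a, b, c, d, w} : Finset V),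
      ∀ z3 ∈ Finset.univ \ ({v, a, b, c, d, w} : Finset V),
      G.Adj z1 z2 → G.Adj z1 z3 → G.Adj z2 z3 → False := by
    intro z1 hz1 z2 hz2 z3 hz3 h12 h13 h23
    obtain ⟨e1, e2, e3, _, _, _⟩ := (hZmem z1).mp hz1
    obtain ⟨f1', f2', f3', _, _, _⟩ := (hZmem z2).mp hz2
    obtain ⟨g1, g2, g3, _, _, _⟩ := (hZmem z3).mp hz3
    exact hDTv z1 z2 z3 v a b h12 h13 h23 hva hvb hab e1 e2 e3 f1' f2' f3' g1 g2 g3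
  -- the three columns have exactly two elements each
  have hCb : ((Finset.univ \ ({v, a, b, c, d, w} : Finset V)).filter
      (fun z => G.Adj b z)).card = 2 := by
    have hub : ((Finset.univ \ ({v, a, b, c, d, w} : Finset V)).filter
        (fun z => G.Adj b z)).card ≤ 2 := by
      by_contra hcn
      have h3 : 3 ≤ ((Finset.univ \ ({v, a, b, c, d, w} : Finset V)).filter
          (fun z => G.Adj b z)).card := by omega
      obtain ⟨z1, z2, z3, hz1, hz2, hz3, n12, n13, n23⟩ := exists_three h3
      rw [Finset.mem_filter] at hz1 hz2 hz3
      exact hS4v v z1 z2 z3 (Ne.symm ((hZmem z1).mp hz1.1).1) (Ne.symm ((hZmem z2).mp hz2.1).1)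
        (Ne.symm ((hZmem z3).mp hz3.1).1) n12 n13 n23
        (fun hh => (hf2v z1 hz1.1 hh).2 hz1.2) (fun hh => (hf2v z2 hz2.1 hh).2 hz2.2)
        (fun hh => (hf2v z3 hz3.1 hh).2 hz3.2)
        (fun hh => (hf3 z1 hz1.1 z2 hz2.1 hh).1 ⟨hz1.2, hz2.2⟩)
        (fun hh => (hf3 z1 hz1.1 z3 hz3.1 hh).1 ⟨hz1.2, hz3.2⟩)
        (fun hh => (hf3 z2 hz2.1 z3 hz3.1 hh).1 ⟨hz2.2, hz3.2⟩)
    have hnb : ∀ u : V, u ∈ Finset.univ \ (({b, v, a} : Finset V) ∪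
        (Finset.univ \ ({v, a, b, c, d, w} : Finset V)).filter (fun z => G.Adj b z)) →
        ¬G.Adj b u := by
      intro u hu hbu
      simp only [Finset.mem_sdiff, Finset.mem_univ, true_and, Finset.mem_union,
        Finset.mem_insert, Finset.mem_singleton, not_or] at hu
      obtain ⟨⟨u1, u2, u3⟩, u4⟩ := hu
      have huc : u ≠ c := fun hh => hnbc (hh ▸ hbu)
      have hud : u ≠ d := fun hh => hnbd (hh ▸ hbu)
      have huw : u ≠ w := fun hh => hnbw (hh ▸ hbu)
      exact u4 (Finset.mem_filter.mpr ⟨(hZmem u).mpr ⟨u2, u3, u1, huc, hud, huw⟩, hbu⟩)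
    have hM5 : (Finset.univ \ (({b, v, a} : Finset V) ∪
        (Finset.univ \ ({v, a, b, c, d, w} : Finset V)).filter (fun z => G.Adj b z))).card
        ≤ 5 := by
      apply R33 (G := G)
      · intro x hx y hy z hz hxy hxz hyz
        have hx' := hx; have hy' := hy; have hz' := hz
        simp only [Finset.mem_sdiff, Finset.mem_univ, true_and, Finset.mem_union,
          Finset.mem_insert, Finset.mem_singleton, not_or] at hx' hy' hz'
        exact hTF2va x y z hxy hxz hyz hx'.1.2.1 hx'.1.2.2 hy'.1.2.1 hy'.1.2.2
          hz'.1.2.1 hz'.1.2.2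
      · intro x hx y hy z hz n1 n2 n3 a1 a2 a3
        have hx' := hx; have hy' := hy; have hz' := hz
        simp only [Finset.mem_sdiff, Finset.mem_univ, true_and, Finset.mem_union,
          Finset.mem_insert, Finset.mem_singleton, not_or] at hx' hy' hz'
        exact hS4v b x y z (Ne.symm hx'.1.1) (Ne.symm hy'.1.1) (Ne.symm hz'.1.1) n1 n2 n3
          (hnb x hx) (hnb y hy) (hnb z hz) a1 a2 a3
    have hdisj : Disjoint ({b, v, a} : Finset V)
        ((Finset.univ \ ({v, a, b, c, d, w} : Finset V)).filter (fun z => G.Adj b z)) := by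
      rw [Finset.disjoint_left]
      intro u hu hu'
      obtain ⟨e1, e2, e3, _, _, _⟩ := (hZmem u).mp (Finset.mem_filter.mp hu').1
      simp only [Finset.mem_insert, Finset.mem_singleton] at hu
      rcases hu with rfl | rfl | rfl
      · exact e3 rfl
      · exact e1 rfl
      · exact e2 rfl
    have hc3 : ({b, v, a} : Finset V).card = 3 := by
      rw [Finset.card_insert_of_notMem (by simp [Ne.symm nvb, Ne.symm nab]),
        Finset.card_insert_of_notMem (by simp [nva]), Finset.card_singleton]
    have hMcard : (Finset.univ \ (({b, v, a} : Finset V) ∪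
        (Finset.univ \ ({v, a, b, c, d, w} : Finset V)).filter (fun z => G.Adj b z))).card
        = 10 - (3 + ((Finset.univ \ ({v, a, b, c, d, w} : Finset V)).filter
          (fun z => G.Adj b z)).card) := by
      rw [Finset.card_sdiff_of_subset (Finset.subset_univ _), hcardV, hn10,
        Finset.card_union_of_disjoint hdisj, hc3]
    omega
  have hCd : ((Finset.univ \ ({v, a, b, c, d, w} : Finset V)).filter
      (fun z => G.Adj d z)).card = 2 := by
    have hub : ((Finset.univ \ ({v, a, b, c, d, w} : Finset V)).filter
        (fun z => G.Adj d z)).card ≤ 2 := by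
      by_contra hcn
      have h3 : 3 ≤ ((Finset.univ \ ({v, a, b, c, d, w} : Finset V)).filter
          (fun z => G.Adj d z)).card := by omega
      obtain ⟨z1, z2, z3, hz1, hz2, hz3, n12, n13, n23⟩ := exists_three h3
      rw [Finset.mem_filter] at hz1 hz2 hz3
      exact hS4v v z1 z2 z3 (Ne.symm ((hZmem z1).mp hz1.1).1) (Ne.symm ((hZmem z2).mp hz2.1).1)
        (Ne.symm ((hZmem z3).mp hz3.1).1) n12 n13 n23
        (fun hh => (hf2v z1 hz1.1 hh).1 hz1.2) (fun hh => (hf2v z2 hz2.1 hh).1 hz2.2)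
        (fun hh => (hf2v z3 hz3.1 hh).1 hz3.2)
        (fun hh => (hf3 z1 hz1.1 z2 hz2.1 hh).2.1 ⟨hz1.2, hz2.2⟩)
        (fun hh => (hf3 z1 hz1.1 z3 hz3.1 hh).2.1 ⟨hz1.2, hz3.2⟩)
        (fun hh => (hf3 z2 hz2.1 z3 hz3.1 hh).2.1 ⟨hz2.2, hz3.2⟩)
    have hnd : ∀ u : V, u ∈ Finset.univ \ (({d, v, c} : Finset V) ∪
        (Finset.univ \ ({v, a, b, c, d, w} : Finset V)).filter (fun z => G.Adj d z)) →
        ¬G.Adj d u := by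
      intro u hu hdu
      simp only [Finset.mem_sdiff, Finset.mem_univ, true_and, Finset.mem_union,
        Finset.mem_insert, Finset.mem_singleton, not_or] at hu
      obtain ⟨⟨u1, u2, u3⟩, u4⟩ := hu
      have hua : u ≠ a := fun hh => hnad (G.adj_symm (hh ▸ hdu))
      have hub' : u ≠ b := fun hh => hnbd (G.adj_symm (hh ▸ hdu))
      have huw : u ≠ w := fun hh => hndw (hh ▸ hdu)
      exact u4 (Finset.mem_filter.mpr ⟨(hZmem u).mpr ⟨u2, hua, hub', u3, u1, huw⟩, hdu⟩)
    have hM5 : (Finset.univ \ (({d, v, c} : Finset V) ∪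
        (Finset.univ \ ({v, a, b, c, d, w} : Finset V)).filter (fun z => G.Adj d z))).card
        ≤ 5 := by
      apply R33 (G := G)
      · intro x hx y hy z hz hxy hxz hyz
        have hx' := hx; have hy' := hy; have hz' := hz
        simp only [Finset.mem_sdiff, Finset.mem_univ, true_and, Finset.mem_union,
          Finset.mem_insert, Finset.mem_singleton, not_or] at hx' hy' hz'
        exact hTF2vc x y z hxy hxz hyz hx'.1.2.1 hx'.1.2.2 hy'.1.2.1 hy'.1.2.2
          hz'.1.2.1 hz'.1.2.2
      · intro x hx y hy z hz n1 n2 n3 a1 a2 a3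
        have hx' := hx; have hy' := hy; have hz' := hz
        simp only [Finset.mem_sdiff, Finset.mem_univ, true_and, Finset.mem_union,
          Finset.mem_insert, Finset.mem_singleton, not_or] at hx' hy' hz'
        exact hS4v d x y z (Ne.symm hx'.1.1) (Ne.symm hy'.1.1) (Ne.symm hz'.1.1) n1 n2 n3
          (hnd x hx) (hnd y hy) (hnd z hz) a1 a2 a3
    have hdisj : Disjoint ({d, v, c} : Finset V)
        ((Finset.univ \ ({v, a, b, c, d, w} : Finset V)).filter (fun z => G.Adj d z)) := by
      rw [Finset.disjoint_left]
      intro u hu hu'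
      obtain ⟨e1, _, _, e4, e5, _⟩ := (hZmem u).mp (Finset.mem_filter.mp hu').1
      simp only [Finset.mem_insert, Finset.mem_singleton] at hu
      rcases hu with rfl | rfl | rfl
      · exact e5 rfl
      · exact e1 rfl
      · exact e4 rfl
    have hc3 : ({d, v, c} : Finset V).card = 3 := by
      rw [Finset.card_insert_of_notMem (by simp [Ne.symm nvd, Ne.symm ncd]),
        Finset.card_insert_of_notMem (by simp [nvc]), Finset.card_singleton]
    have hMcard : (Finset.univ \ (({d, v, c} : Finset V) ∪
        (Finset.univ \ ({v, a, b, c, d, w} : Finset V)).filter (fun z => G.Adj d z))).card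
        = 10 - (3 + ((Finset.univ \ ({v, a, b, c, d, w} : Finset V)).filter
          (fun z => G.Adj d z)).card) := by
      rw [Finset.card_sdiff_of_subset (Finset.subset_univ _), hcardV, hn10,
        Finset.card_union_of_disjoint hdisj, hc3]
    omega
  have hCw : ((Finset.univ \ ({v, a, b, c, d, w} : Finset V)).filter
      (fun z => G.Adj w z)).card = 2 := by
    have hub : ((Finset.univ \ ({v, a, b, c, d, w} : Finset V)).filter
        (fun z => G.Adj w z)).card ≤ 2 := by
      by_contra hcn
      have h3 : 3 ≤ ((Finset.univ \ ({v, a, b, c, d, w} : Finset V)).filter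
          (fun z => G.Adj w z)).card := by omega
      obtain ⟨z1, z2, z3, hz1, hz2, hz3, n12, n13, n23⟩ := exists_three h3
      rw [Finset.mem_filter] at hz1 hz2 hz3
      exact hS4v a z1 z2 z3 (Ne.symm ((hZmem z1).mp hz1.1).2.1)
        (Ne.symm ((hZmem z2).mp hz2.1).2.1) (Ne.symm ((hZmem z3).mp hz3.1).2.1) n12 n13 n23
        (fun hh => (hf2a z1 hz1.1 hh).1 hz1.2) (fun hh => (hf2a z2 hz2.1 hh).1 hz2.2)
        (fun hh => (hf2a z3 hz3.1 hh).1 hz3.2)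
        (fun hh => (hf3 z1 hz1.1 z2 hz2.1 hh).2.2 ⟨hz1.2, hz2.2⟩)
        (fun hh => (hf3 z1 hz1.1 z3 hz3.1 hh).2.2 ⟨hz1.2, hz3.2⟩)
        (fun hh => (hf3 z2 hz2.1 z3 hz3.1 hh).2.2 ⟨hz2.2, hz3.2⟩)
    have hnw : ∀ u : V, u ∈ Finset.univ \ (({w, a, c} : Finset V) ∪
        (Finset.univ \ ({v, a, b, c, d, w} : Finset V)).filter (fun z => G.Adj w z)) →
        ¬G.Adj w u := by
      intro u hu hwu
      simp only [Finset.mem_sdiff, Finset.mem_univ, true_and, Finset.mem_union,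
        Finset.mem_insert, Finset.mem_singleton, not_or] at hu
      obtain ⟨⟨u1, u2, u3⟩, u4⟩ := hu
      have huv : u ≠ v := fun hh => hnvw (G.adj_symm (hh ▸ hwu))
      have hub' : u ≠ b := fun hh => hnbw (G.adj_symm (hh ▸ hwu))
      have hud : u ≠ d := fun hh => hndw (G.adj_symm (hh ▸ hwu))
      exact u4 (Finset.mem_filter.mpr ⟨(hZmem u).mpr ⟨huv, u2, hub', u3, hud, u1⟩, hwu⟩)
    have hM5 : (Finset.univ \ (({w, a, c} : Finset V) ∪
        (Finset.univ \ ({v, a, b, c, d, w} : Finset V)).filter (fun z => G.Adj w z))).card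
        ≤ 5 := by
      apply R33 (G := G)
      · intro x hx y hy z hz hxy hxz hyz
        have hx' := hx; have hy' := hy; have hz' := hz
        simp only [Finset.mem_sdiff, Finset.mem_univ, true_and, Finset.mem_union,
          Finset.mem_insert, Finset.mem_singleton, not_or] at hx' hy' hz'
        exact hTF2ac x y z hxy hxz hyz hx'.1.2.1 hx'.1.2.2 hy'.1.2.1 hy'.1.2.2
          hz'.1.2.1 hz'.1.2.2
      · intro x hx y hy z hz n1 n2 n3 a1 a2 a3
        have hx' := hx; have hy' := hy; have hz' := hz
        simp only [Finset.mem_sdiff, Finset.mem_univ, true_and, Finset.mem_union,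
          Finset.mem_insert, Finset.mem_singleton, not_or] at hx' hy' hz'
        exact hS4v w x y z (Ne.symm hx'.1.1) (Ne.symm hy'.1.1) (Ne.symm hz'.1.1) n1 n2 n3
          (hnw x hx) (hnw y hy) (hnw z hz) a1 a2 a3
    have hdisj : Disjoint ({w, a, c} : Finset V)
        ((Finset.univ \ ({v, a, b, c, d, w} : Finset V)).filter (fun z => G.Adj w z)) := by
      rw [Finset.disjoint_left]
      intro u hu hu'
      obtain ⟨_, e2, _, e4, _, e6⟩ := (hZmem u).mp (Finset.mem_filter.mp hu').1
      simp only [Finset.mem_insert, Finset.mem_singleton] at hu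
      rcases hu with rfl | rfl | rfl
      · exact e6 rfl
      · exact e2 rfl
      · exact e4 rfl
    have hc3 : ({w, a, c} : Finset V).card = 3 := by
      rw [Finset.card_insert_of_notMem (by simp [Ne.symm naw, Ne.symm ncw]),
        Finset.card_insert_of_notMem (by simp [hac]), Finset.card_singleton]
    have hMcard : (Finset.univ \ (({w, a, c} : Finset V) ∪
        (Finset.univ \ ({v, a, b, c, d, w} : Finset V)).filter (fun z => G.Adj w z))).card
        = 10 - (3 + ((Finset.univ \ ({v, a, b, c, d, w} : Finset V)).filter
          (fun z => G.Adj w z)).card) := by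
      rw [Finset.card_sdiff_of_subset (Finset.subset_univ _), hcardV, hn10,
        Finset.card_union_of_disjoint hdisj, hc3]
    omega
  -- overlap of columns and the endgame
  by_cases hod1 : ∃ z ∈ Finset.univ \ ({v, a, b, c, d, w} : Finset V), G.Adj d z ∧ G.Adj b z
  · obtain ⟨z0, hz0Z, hz0d, hz0b⟩ := hod1
    exact endgame (G := G) (p := v) (q := a) (r := c) (op := w) (oq := d) (or₀ := b) hZ4
      (fun z hz => by
        obtain ⟨e1, e2, e3, e4, e5, e6⟩ := (hZmem z).mp hz
        exact ⟨e1, e2, e4, e6, e5, e3⟩)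
      nvw had (Ne.symm hbc) hnvw hnad (fun hh => hnbc (G.adj_symm hh))
      (fun z hz => by
        rcases hf1 z hz with hh | hh | hh
        · exact Or.inr (Or.inr hh)
        · exact Or.inr (Or.inl hh)
        · exact Or.inl hh)
      hf2v hf2a hf2c
      (fun z hz z' hz' hzz' => by
        obtain ⟨t1, t2, t3⟩ := hf3 z hz z' hz' hzz'
        exact ⟨t3, t2, t1⟩)
      hCw hCd hCb hS4v hZT z0 hz0Z hz0d hz0b
  · by_cases hod2 : ∃ z ∈ Finset.univ \ ({v, a, b, c, d, w} : Finset V),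
        G.Adj w z ∧ G.Adj b z
    · obtain ⟨z0, hz0Z, hz0w, hz0b⟩ := hod2
      exact endgame (G := G) (p := a) (q := v) (r := c) (op := d) (oq := w) (or₀ := b) hZ4
        (fun z hz => by
          obtain ⟨e1, e2, e3, e4, e5, e6⟩ := (hZmem z).mp hz
          exact ⟨e2, e1, e4, e5, e6, e3⟩)
        had nvw (Ne.symm hbc) hnad hnvw (fun hh => hnbc (G.adj_symm hh))
        (fun z hz => by
          rcases hf1 z hz with hh | hh | hh
          · exact Or.inr (Or.inr hh)
          · exact Or.inl hh
          · exact Or.inr (Or.inl hh))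
        hf2a hf2v
        (fun z hz hh => ⟨(hf2c z hz hh).2, (hf2c z hz hh).1⟩)
        (fun z hz z' hz' hzz' => by
          obtain ⟨t1, t2, t3⟩ := hf3 z hz z' hz' hzz'
          exact ⟨t2, t3, t1⟩)
        hCd hCw hCb hS4v hZT z0 hz0Z hz0w hz0b
    · by_cases hod3 : ∃ z ∈ Finset.univ \ ({v, a, b, c, d, w} : Finset V),
          G.Adj w z ∧ G.Adj d z
      · obtain ⟨z0, hz0Z, hz0w, hz0d⟩ := hod3
        exact endgame (G := G) (p := c) (q := v) (r := a) (op := b) (oq := w) (or₀ := d) hZ4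
          (fun z hz => by
            obtain ⟨e1, e2, e3, e4, e5, e6⟩ := (hZmem z).mp hz
            exact ⟨e4, e1, e2, e3, e6, e5⟩)
          (Ne.symm hbc) nvw had (fun hh => hnbc (G.adj_symm hh)) hnvw hnad
          (fun z hz => by
            rcases hf1 z hz with hh | hh | hh
            · exact Or.inl hh
            · exact Or.inr (Or.inr hh)
            · exact Or.inr (Or.inl hh))
          hf2c
          (fun z hz hh => ⟨(hf2v z hz hh).2, (hf2v z hz hh).1⟩)
          (fun z hz hh => ⟨(hf2a z hz hh).2, (hf2a z hz hh).1⟩)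
          (fun z hz z' hz' hzz' => by
            obtain ⟨t1, t2, t3⟩ := hf3 z hz z' hz' hzz'
            exact ⟨t1, t3, t2⟩)
          hCb hCw hCd hS4v hZT z0 hz0Z hz0w hz0d
      · -- all three columns pairwise disjoint : 6 ≤ 4, contradiction
        push_neg at hod1 hod2 hod3
        have hd1 : Disjoint ((Finset.univ \ ({v, a, b, c, d, w} : Finset V)).filter
            (fun z => G.Adj b z)) ((Finset.univ \ ({v, a, b, c, d, w} : Finset V)).filter
            (fun z => G.Adj d z)) := by
          rw [Finset.disjoint_left]
          intro u hu hu'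
          rw [Finset.mem_filter] at hu hu'
          exact hod1 u hu.1 hu'.2 hu.2
        have hd2 : Disjoint (((Finset.univ \ ({v, a, b, c, d, w} : Finset V)).filter
            (fun z => G.Adj b z)) ∪ ((Finset.univ \ ({v, a, b, c, d, w} : Finset V)).filter
            (fun z => G.Adj d z))) ((Finset.univ \ ({v, a, b, c, d, w} : Finset V)).filter
            (fun z => G.Adj w z)) := by
          rw [Finset.disjoint_left]
          intro u hu hu'
          rw [Finset.mem_filter] at hu'
          rw [Finset.mem_union, Finset.mem_filter, Finset.mem_filter] at hu
          rcases hu with hu | hu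
          · exact hod2 u hu.1 hu'.2 hu.2
          · exact hod3 u hu.1 hu'.2 hu.2
        have hsub : (((Finset.univ \ ({v, a, b, c, d, w} : Finset V)).filter
            (fun z => G.Adj b z)) ∪ ((Finset.univ \ ({v, a, b, c, d, w} : Finset V)).filter
            (fun z => G.Adj d z))) ∪ ((Finset.univ \ ({v, a, b, c, d, w} : Finset V)).filter
            (fun z => G.Adj w z)) ⊆ Finset.univ \ ({v, a, b, c, d, w} : Finset V) := by
          intro u hu
          rw [Finset.mem_union, Finset.mem_union] at hu
          rcases hu with (hu | hu) | hu <;> exact (Finset.mem_filter.mp hu).1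
        have hcu := Finset.card_le_card hsub
        rw [Finset.card_union_of_disjoint hd2, Finset.card_union_of_disjoint hd1,
          hCb, hCd, hCw, hZ4] at hcu
        omega
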